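/- (Ore extension as twisted tensor product) Let A be a k-algebra, σ an algebra automorphism of A, and δ a σ-derivation (δ(ab) = σ(a)δ(b) + δ(a)b). Define τ : k[z] ⊗ A → A ⊗ k[z] on generators by τ(z ⊗ a) = σ(a) ⊗ z + δ(a) ⊗ 1 and extend via the quasitriangularity conditions. Then τ is a twisting map and A ⊗^τ k[z] is isomorphic as an algebra to the Ore extension A[z; σ, δ]. -/

import Mathlib

open TensorProduct

noncomputable section

variable {k : Type*} [Field k]
variable {A B : Type*} [Ring A] [Algebra k A] [Ring B] [Algebra k B]

/-- The multiplication `(m_A ⊗ m_B) ∘ (id_A ⊗ τ ⊗ id_B)` on `A ⊗ B`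
(as a linear map on `(A ⊗ B) ⊗ (A ⊗ B)`). -/
def twMulMap (τ : B ⊗[k] A →ₗ[k] A ⊗[k] B) :
    (A ⊗[k] B) ⊗[k] (A ⊗[k] B) →ₗ[k] A ⊗[k] B :=
  TensorProduct.map (LinearMap.mul' k A) (LinearMap.mul' k B)
    ∘ₗ (TensorProduct.assoc k (A ⊗[k] A) B B).toLinearMap
    ∘ₗ TensorProduct.map (TensorProduct.assoc k A A B).symm.toLinearMap
        (LinearMap.id : B →ₗ[k] B)
    ∘ₗ TensorProduct.map (TensorProduct.map (LinearMap.id : A →ₗ[k] A) τ)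
        (LinearMap.id : B →ₗ[k] B)
    ∘ₗ TensorProduct.map (TensorProduct.assoc k A B A).toLinearMap
        (LinearMap.id : B →ₗ[k] B)
    ∘ₗ (TensorProduct.assoc k (A ⊗[k] B) A B).symm.toLinearMap

/-- `τ` is normal: `τ(b ⊗ 1) = 1 ⊗ b` and `τ(1 ⊗ a) = a ⊗ 1`. -/
def IsNormal (τ : B ⊗[k] A →ₗ[k] A ⊗[k] B) : Prop :=
  (∀ b : B, τ (b ⊗ₜ (1 : A)) = (1 : A) ⊗ₜ b) ∧
    ∀ a : A, τ ((1 : B) ⊗ₜ a) = a ⊗ₜ (1 : B)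

/-- `τ` is quasitriangular. -/
def IsQuasitriangular (τ : B ⊗[k] A →ₗ[k] A ⊗[k] B) : Prop :=
  (TensorProduct.map (LinearMap.id : A →ₗ[k] A) (LinearMap.mul' k B)
      ∘ₗ (TensorProduct.assoc k A B B).toLinearMap
      ∘ₗ TensorProduct.map τ (LinearMap.id : B →ₗ[k] B)
      ∘ₗ (TensorProduct.assoc k B A B).symm.toLinearMap
      ∘ₗ TensorProduct.map (LinearMap.id : B →ₗ[k] B) τ
      ∘ₗ (TensorProduct.assoc k B B A).toLinearMap
    = τ ∘ₗ TensorProduct.map (LinearMap.mul' k B) (LinearMap.id : A →ₗ[k] A)) ∧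
  (TensorProduct.map (LinearMap.mul' k A) (LinearMap.id : B →ₗ[k] B)
      ∘ₗ (TensorProduct.assoc k A A B).symm.toLinearMap
      ∘ₗ TensorProduct.map (LinearMap.id : A →ₗ[k] A) τ
      ∘ₗ (TensorProduct.assoc k A B A).toLinearMap
      ∘ₗ TensorProduct.map τ (LinearMap.id : A →ₗ[k] A)
      ∘ₗ (TensorProduct.assoc k B A A).symm.toLinearMap
    = τ ∘ₗ TensorProduct.map (LinearMap.id : B →ₗ[k] B) (LinearMap.mul' k A))

namespace OreTw

variable (σ : A ≃ₐ[k] A) (δ : A →ₗ[k] A)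

def Zop : A ⊗[k] Polynomial k →ₗ[k] A ⊗[k] Polynomial k :=
  TensorProduct.map σ.toLinearMap (LinearMap.mulLeft k Polynomial.X)
    + TensorProduct.map δ LinearMap.id

lemma Zop_tmul (a : A) (p : Polynomial k) :
    Zop σ δ (a ⊗ₜ p) = σ a ⊗ₜ (Polynomial.X * p) + δ a ⊗ₜ p := by
  simp [Zop]

def τmap : Polynomial k ⊗[k] A →ₗ[k] A ⊗[k] Polynomial k :=
  TensorProduct.lift <|
    ((LinearMap.llcomp k A (A ⊗[k] Polynomial k) (A ⊗[k] Polynomial k)).flip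
       ((TensorProduct.mk k A (Polynomial k)).flip 1))
      ∘ₗ (Polynomial.aeval (Zop σ δ)).toLinearMap

lemma τmap_tmul (p : Polynomial k) (a : A) :
    τmap σ δ (p ⊗ₜ a) = Polynomial.aeval (Zop σ δ) p (a ⊗ₜ 1) := by
  simp [τmap]

lemma commute_aeval {Y : Module.End k (A ⊗[k] Polynomial k)}
    (h : Commute (Zop σ δ) Y) (p : Polynomial k) :
    Commute (Polynomial.aeval (Zop σ δ) p) Y := by
  induction p using Polynomial.induction_on' with
  | add p q hp hq => simpa [map_add] using hp.add_left hq
  | monomial n c =>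
      rw [Polynomial.aeval_monomial]
      exact (Algebra.commute_algebraMap_left c Y).mul_left (h.pow_left n)

/-- right multiplication by `r` on the polynomial factor -/
def Rop (r : Polynomial k) : A ⊗[k] Polynomial k →ₗ[k] A ⊗[k] Polynomial k :=
  LinearMap.lTensor A (LinearMap.mulRight k r)

lemma Rop_tmul (r : Polynomial k) (a : A) (q : Polynomial k) :
    Rop (A := A) r (a ⊗ₜ q) = a ⊗ₜ (q * r) := rfl

/-- left multiplication by `c` on the `A` factor -/
def Lop (c : A) : A ⊗[k] Polynomial k →ₗ[k] A ⊗[k] Polynomial k :=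
  LinearMap.rTensor (Polynomial k) (LinearMap.mulLeft k c)

lemma Lop_tmul (c a : A) (q : Polynomial k) :
    Lop (k := k) c (a ⊗ₜ q) = (c * a) ⊗ₜ q := rfl

lemma Zop_comm_Rop (r : Polynomial k) : Commute (Zop σ δ) (Rop r) := by
  apply TensorProduct.ext'
  intro a q
  simp only [Commute, SemiconjBy, Module.End.mul_apply, Rop_tmul, Zop_tmul, map_add, Rop_tmul,
    mul_assoc]

lemma aeval_comm_Rop (p r : Polynomial k) :
    Commute (Polynomial.aeval (Zop σ δ) p) (Rop r) :=
  commute_aeval σ δ (Zop_comm_Rop σ δ r) p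

lemma aeval_tmul (p : Polynomial k) (a : A) (r : Polynomial k) :
    Polynomial.aeval (Zop σ δ) p (a ⊗ₜ r) =
      Rop r (Polynomial.aeval (Zop σ δ) p (a ⊗ₜ 1)) := by
  have h := congrFun (congrArg DFunLike.coe (aeval_comm_Rop σ δ p r)) (a ⊗ₜ 1)
  simpa [Module.End.mul_apply, Rop_tmul] using h

lemma Zop_one_tmul (hδ1 : δ 1 = 0) (q : Polynomial k) :
    Zop σ δ ((1 : A) ⊗ₜ q) = (1 : A) ⊗ₜ (Polynomial.X * q) := by
  simp [Zop_tmul, hδ1]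

lemma aeval_one_tmul (hδ1 : δ 1 = 0) (p q : Polynomial k) :
    Polynomial.aeval (Zop σ δ) p ((1 : A) ⊗ₜ q) = (1 : A) ⊗ₜ (p * q) := by
  induction p using Polynomial.induction_on' with
  | add p₁ p₂ h1 h2 => simp [map_add, h1, h2, add_mul, tmul_add]
  | monomial n c =>
      rw [Polynomial.aeval_monomial]
      have hpow : ∀ n : ℕ, ((Zop σ δ) ^ n) ((1 : A) ⊗ₜ q) = (1 : A) ⊗ₜ (Polynomial.X ^ n * q) := by
        intro n
        induction n with
        | zero => simp
        | succ m ih =>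
            rw [pow_succ']
            simp only [Module.End.mul_apply, ih, Zop_one_tmul σ δ hδ1]
            rw [← mul_assoc, ← pow_succ']
      simp only [Module.End.mul_apply, hpow]
      rw [Module.algebraMap_end_apply]
      rw [show (Polynomial.monomial n c : Polynomial k) * q = c • (Polynomial.X ^ n * q) by
        rw [← Polynomial.C_mul_X_pow_eq_monomial, Polynomial.smul_eq_C_mul, mul_assoc]]
      rw [tmul_smul]


lemma Zop_comp_Lop (hδ : ∀ a b : A, δ (a * b) = σ a * δ b + δ a * b) (c : A) :
    Zop σ δ ∘ₗ Lop (k := k) c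
      = Lop (k := k) (σ c) ∘ₗ Zop σ δ + Lop (k := k) (δ c) := by
  apply TensorProduct.ext'
  intro a q
  simp only [LinearMap.comp_apply, LinearMap.add_apply, Lop_tmul, Zop_tmul, map_add,
    map_mul, hδ, add_tmul]
  abel

/-- `τ(p ⊗ 1) = 1 ⊗ p` -/
lemma τmap_tmul_one (hδ1 : δ 1 = 0) (p : Polynomial k) :
    τmap σ δ (p ⊗ₜ (1 : A)) = (1 : A) ⊗ₜ p := by
  rw [τmap_tmul, aeval_one_tmul σ δ hδ1, mul_one]

/-- `τ(1 ⊗ a) = a ⊗ 1` -/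
lemma τmap_one_tmul (a : A) :
    τmap σ δ ((1 : Polynomial k) ⊗ₜ a) = a ⊗ₜ (1 : Polynomial k) := by
  rw [τmap_tmul]; simp

lemma τmap_X_tmul (a : A) :
    τmap σ δ ((Polynomial.X : Polynomial k) ⊗ₜ a)
      = σ a ⊗ₜ Polynomial.X + δ a ⊗ₜ (1 : Polynomial k) := by
  rw [τmap_tmul]
  simp [Zop_tmul]

lemma τmap_X_mul (r : Polynomial k) (a : A) :
    τmap σ δ ((Polynomial.X * r) ⊗ₜ a) = Zop σ δ (τmap σ δ (r ⊗ₜ a)) := by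
  simp only [τmap_tmul, map_mul, Polynomial.aeval_X, Module.End.mul_apply]


section Generic
variable {B : Type*} [Ring B] [Algebra k B]

lemma F0_aux (s : A ⊗[k] B) (r : B) :
    (TensorProduct.map (LinearMap.id : A →ₗ[k] A) (LinearMap.mul' k B))
        ((TensorProduct.assoc k A B B) (s ⊗ₜ r))
      = LinearMap.lTensor A (LinearMap.mulRight k r) s := by
  induction s with
  | zero =>
      rw [zero_tmul, LinearEquiv.map_zero, LinearMap.map_zero, LinearMap.map_zero]
  | tmul a q => simp [LinearMap.mulRight_apply]
  | add x y hx hy =>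
      rw [add_tmul, LinearEquiv.map_add, LinearMap.map_add, hx, hy, LinearMap.map_add]

lemma G00_aux (c : A) (u : A ⊗[k] B) :
    (TensorProduct.map (LinearMap.mul' k A) (LinearMap.id : B →ₗ[k] B))
        ((TensorProduct.assoc k A A B).symm (c ⊗ₜ u))
      = LinearMap.rTensor B (LinearMap.mulLeft k c) u := by
  induction u with
  | zero =>
      rw [tmul_zero, LinearEquiv.map_zero, LinearMap.map_zero, LinearMap.map_zero]
  | tmul a q => simp [LinearMap.mulLeft_apply]
  | add x y hx hy =>
      rw [tmul_add, LinearEquiv.map_add, LinearMap.map_add, hx, hy, LinearMap.map_add]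

lemma tw_aux (a : A) (q : B) (t : A ⊗[k] B) :
    (TensorProduct.map (LinearMap.mul' k A) (LinearMap.mul' k B))
        ((TensorProduct.assoc k (A ⊗[k] A) B B)
          ((TensorProduct.map (TensorProduct.assoc k A A B).symm.toLinearMap
              (LinearMap.id : B →ₗ[k] B)) ((a ⊗ₜ t) ⊗ₜ q)))
      = LinearMap.lTensor A (LinearMap.mulRight k q)
          (LinearMap.rTensor B (LinearMap.mulLeft k a) t) := by
  induction t with
  | zero =>
      rw [tmul_zero, zero_tmul, LinearMap.map_zero, LinearEquiv.map_zero, LinearMap.map_zero,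
        LinearMap.map_zero, LinearMap.map_zero]
  | tmul c r => simp [LinearMap.mulLeft_apply, LinearMap.mulRight_apply]
  | add x y hx hy =>
      rw [tmul_add, add_tmul, LinearMap.map_add, LinearEquiv.map_add, LinearMap.map_add, hx, hy,
        LinearMap.map_add, LinearMap.map_add]

end Generic

def Wop (b : A) : A ⊗[k] Polynomial k →ₗ[k] A ⊗[k] Polynomial k :=
  TensorProduct.map (LinearMap.mul' k A) LinearMap.id
    ∘ₗ (TensorProduct.assoc k A A (Polynomial k)).symm.toLinearMap
    ∘ₗ TensorProduct.map LinearMap.id (τmap σ δ)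
    ∘ₗ (TensorProduct.assoc k A (Polynomial k) A).toLinearMap
    ∘ₗ (TensorProduct.mk k (A ⊗[k] Polynomial k) A).flip b

lemma Wop_tmul (b c : A) (r : Polynomial k) :
    Wop σ δ b (c ⊗ₜ r) = Lop c (τmap σ δ (r ⊗ₜ b)) := by
  simp only [Wop, LinearMap.comp_apply, LinearMap.flip_apply, mk_apply, assoc_tmul,
    LinearEquiv.coe_coe, map_tmul, LinearMap.id_apply]
  exact G00_aux c _

lemma Zop_comm_Wop (hδ : ∀ a b : A, δ (a * b) = σ a * δ b + δ a * b) (b : A) :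
    Commute (Zop σ δ) (Wop σ δ b) := by
  apply TensorProduct.ext'
  intro c r
  have h1 := congrFun (congrArg DFunLike.coe (Zop_comp_Lop σ δ hδ c)) (τmap σ δ (r ⊗ₜ b))
  simp only [LinearMap.comp_apply, LinearMap.add_apply] at h1
  simp only [Module.End.mul_apply, Wop_tmul, Zop_tmul, h1, map_add, Wop_tmul,
    τmap_X_mul σ δ r b]

lemma aeval_comm_Wop (hδ : ∀ a b : A, δ (a * b) = σ a * δ b + δ a * b) (b : A)
    (p : Polynomial k) :
    Commute (Polynomial.aeval (Zop σ δ) p) (Wop σ δ b) :=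
  commute_aeval σ δ (Zop_comm_Wop σ δ hδ b) p

lemma qt1_aux (p : Polynomial k) (t : A ⊗[k] Polynomial k) :
    (TensorProduct.map (LinearMap.id : A →ₗ[k] A) (LinearMap.mul' k (Polynomial k)))
        ((TensorProduct.assoc k A (Polynomial k) (Polynomial k))
          ((TensorProduct.map (τmap σ δ) (LinearMap.id : Polynomial k →ₗ[k] Polynomial k))
            ((TensorProduct.assoc k (Polynomial k) A (Polynomial k)).symm (p ⊗ₜ t))))
      = Polynomial.aeval (Zop σ δ) p t := by
  induction t with
  | zero =>
      rw [tmul_zero, LinearEquiv.map_zero, LinearMap.map_zero, LinearEquiv.map_zero,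
        LinearMap.map_zero, LinearMap.map_zero]
  | tmul a r =>
      rw [assoc_symm_tmul, map_tmul, LinearMap.id_apply, F0_aux, τmap_tmul,
        aeval_tmul σ δ p a r]
      rfl
  | add x y hx hy =>
      rw [tmul_add, LinearEquiv.map_add, LinearMap.map_add, LinearEquiv.map_add,
        LinearMap.map_add, hx, hy, LinearMap.map_add]

lemma qt2_aux (b : A) (t : A ⊗[k] Polynomial k) :
    (TensorProduct.map (LinearMap.mul' k A) (LinearMap.id : Polynomial k →ₗ[k] Polynomial k))
        ((TensorProduct.assoc k A A (Polynomial k)).symm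
          ((TensorProduct.map (LinearMap.id : A →ₗ[k] A) (τmap σ δ))
            ((TensorProduct.assoc k A (Polynomial k) A) (t ⊗ₜ b))))
      = Wop σ δ b t := by
  induction t with
  | zero =>
      rw [zero_tmul, LinearEquiv.map_zero, LinearMap.map_zero, LinearEquiv.map_zero,
        LinearMap.map_zero, LinearMap.map_zero]
  | tmul c r =>
      rw [assoc_tmul, map_tmul, LinearMap.id_apply, G00_aux, Wop_tmul]
      rfl
  | add x y hx hy =>
      rw [add_tmul, LinearEquiv.map_add, LinearMap.map_add, LinearEquiv.map_add,
        LinearMap.map_add, hx, hy, LinearMap.map_add]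

end OreTw


lemma twMulMap_tmul (τ : B ⊗[k] A →ₗ[k] A ⊗[k] B) (a : A) (p : B) (a' : A) (q : B) :
    twMulMap τ ((a ⊗ₜ p) ⊗ₜ (a' ⊗ₜ q))
      = LinearMap.lTensor A (LinearMap.mulRight k q)
          (LinearMap.rTensor B (LinearMap.mulLeft k a) (τ (p ⊗ₜ a'))) := by
  simp only [twMulMap, LinearMap.comp_apply, LinearEquiv.coe_coe, assoc_symm_tmul, map_tmul,
    assoc_tmul, LinearMap.id_apply]
  exact OreTw.tw_aux a q _

/-- **Ore extensions as twisted tensor products.** For an algebra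
automorphism `σ` of `A` and a `σ`-derivation `δ`, there is a twisting map
`τ : k[z] ⊗ A → A ⊗ k[z]` with `τ(z ⊗ a) = σ(a) ⊗ z + δ(a) ⊗ 1`, and `A ⊗^τ k[z]`
is the Ore extension `A[z; σ, δ]`: `A` embeds multiplicatively via `a ↦ a ⊗ 1`,
the element `z = 1 ⊗ z` satisfies `z · a = σ(a) z + δ(a)`, and `{zⁿ}` is a basis of
`A ⊗^τ k[z]` as a free left `A`-module (`a · zⁿ = a ⊗ zⁿ`). -/
theorem oreExtension_twistedTensorProduct
    (σ : A ≃ₐ[k] A) (δ : A →ₗ[k] A)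
    (hδ : ∀ a b : A, δ (a * b) = σ a * δ b + δ a * b) :
    ∃ τ : Polynomial k ⊗[k] A →ₗ[k] A ⊗[k] Polynomial k,
      IsNormal τ ∧ IsQuasitriangular τ ∧
      (∀ a : A, τ (Polynomial.X ⊗ₜ a)
          = σ a ⊗ₜ Polynomial.X + δ a ⊗ₜ (1 : Polynomial k)) ∧
      (∀ a a' : A,
        twMulMap τ (((a ⊗ₜ (1 : Polynomial k)) : A ⊗[k] Polynomial k)
            ⊗ₜ ((a' ⊗ₜ (1 : Polynomial k)) : A ⊗[k] Polynomial k))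
          = (a * a') ⊗ₜ (1 : Polynomial k)) ∧
      (∀ a : A,
        twMulMap τ ((((1 : A) ⊗ₜ Polynomial.X) : A ⊗[k] Polynomial k)
            ⊗ₜ ((a ⊗ₜ (1 : Polynomial k)) : A ⊗[k] Polynomial k))
          = σ a ⊗ₜ Polynomial.X + δ a ⊗ₜ (1 : Polynomial k)) ∧
      (∀ (a : A) (n : ℕ),
        twMulMap τ (((a ⊗ₜ (1 : Polynomial k)) : A ⊗[k] Polynomial k)
            ⊗ₜ (((1 : A) ⊗ₜ (Polynomial.X ^ n)) : A ⊗[k] Polynomial k))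
          = a ⊗ₜ (Polynomial.X ^ n)) := by
  classical
  have hδ1 : δ 1 = 0 := by
    have h := hδ 1 1
    simp only [mul_one, one_mul, map_one] at h
    exact right_eq_add.mp h
  refine ⟨OreTw.τmap σ δ, ⟨fun p => OreTw.τmap_tmul_one σ δ hδ1 p,
    fun a => OreTw.τmap_one_tmul σ δ a⟩, ⟨?_, ?_⟩, fun a => OreTw.τmap_X_tmul σ δ a,
    ?_, ?_, ?_⟩
  · -- first quasitriangularity condition
    apply TensorProduct.ext_threefold
    intro p q a
    simp only [LinearMap.comp_apply, LinearEquiv.coe_coe, assoc_tmul, map_tmul,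
      LinearMap.id_apply, LinearMap.mul'_apply]
    rw [OreTw.qt1_aux, OreTw.τmap_tmul, OreTw.τmap_tmul, map_mul, Module.End.mul_apply]
  · -- second quasitriangularity condition
    apply TensorProduct.ext'
    intro p y
    induction y with
    | zero => rw [tmul_zero, LinearMap.map_zero, LinearMap.map_zero]
    | tmul a b =>
        simp only [LinearMap.comp_apply, LinearEquiv.coe_coe, assoc_symm_tmul, map_tmul,
          LinearMap.id_apply, LinearMap.mul'_apply]
        rw [OreTw.qt2_aux, OreTw.τmap_tmul, OreTw.τmap_tmul]
        have hc := congrFun (congrArg DFunLike.coe (OreTw.aeval_comm_Wop σ δ hδ b p)) (a ⊗ₜ 1)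
        simp only [Module.End.mul_apply] at hc
        rw [← hc, OreTw.Wop_tmul, OreTw.τmap_one_tmul, OreTw.Lop_tmul]
    | add x y hx hy => rw [tmul_add, LinearMap.map_add, LinearMap.map_add, hx, hy]
  · intro a a'
    rw [twMulMap_tmul, OreTw.τmap_one_tmul]
    simp [LinearMap.rTensor_tmul, LinearMap.lTensor_tmul]
  · intro a
    rw [twMulMap_tmul, OreTw.τmap_X_tmul]
    simp [LinearMap.rTensor_tmul, LinearMap.lTensor_tmul]
  · intro a n
    rw [twMulMap_tmul, OreTw.τmap_one_tmul]
    simp [LinearMap.rTensor_tmul, LinearMap.lTensor_tmul]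

end
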